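/- Channel decomposition: Let i,j ∈ G, let ρ be a state with Tr K_{|conj(b_i)⟩⟨conj(b_i)|}(ρ) > 0, and let γ be a state with Tr K_γ(U_j K̂_{|conj(b_i)⟩⟨conj(b_i)|}(ρ) U_j*) > 0. Then the teleportation channel satisfies Λ_{i,j}(ρ ⊗ γ) = K̂_γ ∘ K^j ∘ K̂_{|conj(b_i)⟩⟨conj(b_i)|}(ρ), where K^j(σ) = U_j σ U_j* and K̂_τ(σ) = K_τ(σ)/Tr K_τ(σ). -/

import Mathlib

open scoped ComplexConjugate Kronecker ComplexOrder
noncomputable section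

/-- `L₂` space over a finite index set. -/
abbrev ES (α : Type) [Fintype α] := EuclideanSpace ℂ α
/-- `L₂(G)` for `G = {1,…,n}`. -/
abbrev L2 (n : ℕ) := EuclideanSpace ℂ (Fin n)

/-- The map `J : L₂(G) → L₂(G×G)`, `(Jf)(k,l) = f(k) δ_{k,l}`. -/
def Jmap (n : ℕ) : L2 n →ₗ[ℂ] ES (Fin n × Fin n) where
  toFun f := WithLp.toLp 2 (fun p : Fin n × Fin n => if p.1 = p.2 then f p.1 else 0)
  map_add' f g := by ext p; by_cases h : p.1 = p.2 <;> simp [h]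
  map_smul' c f := by ext p; by_cases h : p.1 = p.2 <;> simp [h]

/-- Multiplication operator `O_g`. -/
def mulOp {n : ℕ} (g : L2 n) : L2 n →ₗ[ℂ] L2 n where
  toFun f := WithLp.toLp 2 (fun k => g k * f k)
  map_add' f f' := by ext k; simp [mul_add]
  map_smul' c f := by ext k; simp <;> ring

/-- Translation operator `U_k`, `(U_k f)(m) = f(k ⊕ m)`. -/
def transOp {n : ℕ} [NeZero n] (k : Fin n) : L2 n →ₗ[ℂ] L2 n where
  toFun f := WithLp.toLp 2 (fun m => f (k + m))
  map_add' f f' := by ext m; simp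
  map_smul' c f := by ext m; simp

/-- Rank-one operator `|g⟩⟨g|`. -/
def rankOne {α : Type} [Fintype α] (g : ES α) : ES α →ₗ[ℂ] ES α where
  toFun f := (inner ℂ g f : ℂ) • g
  map_add' f f' := by simp [inner_add_right, add_smul]
  map_smul' c f := by simp [inner_smul_right, smul_smul]

/-- Matrix of an operator in the standard bases. -/
def matOf {α β : Type} [Fintype α] [Fintype β] [DecidableEq α] [DecidableEq β]
    (A : ES α →ₗ[ℂ] ES β) : Matrix β α ℂ :=
  LinearMap.toMatrix (PiLp.basisFun 2 ℂ α) (PiLp.basisFun 2 ℂ β) A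

/-- Tensor product `A ⊗ B` of operators, via the Kronecker product of their matrices. -/
def tensorOp {α β γ δ : Type} [Fintype α] [Fintype β] [Fintype γ] [Fintype δ]
    [DecidableEq α] [DecidableEq β] [DecidableEq γ] [DecidableEq δ]
    (A : ES α →ₗ[ℂ] ES β) (B : ES γ →ₗ[ℂ] ES δ) : ES (α × γ) →ₗ[ℂ] ES (β × δ) :=
  Matrix.toEuclideanLin (matOf A ⊗ₖ matOf B)

/-- Elementary tensor `f ⊗ g` of vectors. -/
def tensorVec {n : ℕ} (f g : L2 n) : ES (Fin n × Fin n) :=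
  WithLp.toLp 2 (fun p : Fin n × Fin n => f p.1 * g p.2)

/-- Positivity of an operator. -/
def IsPos {α : Type} [Fintype α] (T : ES α →ₗ[ℂ] ES α) : Prop :=
  ∀ x : ES α, (0 : ℂ) ≤ inner ℂ x (T x)

/-- The constant function `𝟏`. -/
def oneVec (n : ℕ) : L2 n := WithLp.toLp 2 (fun _ => 1)

/-- Pointwise conjugate of a vector. -/
def cvec {n : ℕ} (f : L2 n) : L2 n := WithLp.toLp 2 (fun k => conj (f k))

/-- Pointwise inverse of a vector. -/
def invVec {n : ℕ} (f : L2 n) : L2 n := WithLp.toLp 2 (fun k => (f k)⁻¹)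

/-- `ξ_{k,l} = (B_k ⊗ U_l) J 𝟏`. -/
def xi {n : ℕ} [NeZero n] (b : Fin n → L2 n) (k l : Fin n) : ES (Fin n × Fin n) :=
  tensorOp (mulOp (b k)) (transOp l) (Jmap n (oneVec n))

/-- The entangled state `e(γ) = J γ J*`. -/
def eState {n : ℕ} (γ : L2 n →ₗ[ℂ] L2 n) : ES (Fin n × Fin n) →ₗ[ℂ] ES (Fin n × Fin n) :=
  Jmap n ∘ₗ γ ∘ₗ LinearMap.adjoint (Jmap n)

/-- `T ⊗ S` with `T` acting on `H₁ ⊗ H₂` and `S` on `H₃`, realized on `Fin n × Fin n × Fin n`. -/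
def pairTensorOp {n : ℕ} (T : ES (Fin n × Fin n) →ₗ[ℂ] ES (Fin n × Fin n))
    (S : L2 n →ₗ[ℂ] L2 n) : ES (Fin n × Fin n × Fin n) →ₗ[ℂ] ES (Fin n × Fin n × Fin n) :=
  Matrix.toEuclideanLin
    ((Matrix.reindex (Equiv.prodAssoc (Fin n) (Fin n) (Fin n)) (Equiv.prodAssoc (Fin n) (Fin n) (Fin n)))
      (matOf T ⊗ₖ matOf S))

/-- Partial trace over the first two tensor components of `H₁ ⊗ H₂ ⊗ H₃`. -/
def ptrace12 {n : ℕ} (T : ES (Fin n × Fin n × Fin n) →ₗ[ℂ] ES (Fin n × Fin n × Fin n)) :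
    L2 n →ₗ[ℂ] L2 n :=
  Matrix.toEuclideanLin
    (Matrix.of fun c c' => ∑ a : Fin n, ∑ b : Fin n, matOf T (a, (b, c)) (a, (b, c')))

/-- `G_{i,j} = J* (U_j B_i* ⊗ 𝟏)`. -/
def Gop {n : ℕ} [NeZero n] (b : Fin n → L2 n) (i j : Fin n) : ES (Fin n × Fin n) →ₗ[ℂ] L2 n :=
  LinearMap.adjoint (Jmap n) ∘ₗ tensorOp (transOp j ∘ₗ LinearMap.adjoint (mulOp (b i))) LinearMap.id

/-- The isometry `t_h`. -/
def tMap {n : ℕ} (h : L2 n) : L2 n →ₗ[ℂ] ES (Fin 2 × Fin n) where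
  toFun f := WithLp.toLp 2 (fun p : Fin 2 × Fin n =>
    if p.1 = 0 then h p.2 * f p.2 else (Real.sqrt (1 - ‖h p.2‖ ^ 2) : ℂ) * f p.2)
  map_add' f f' := by ext p; by_cases hp : p.1 = 0 <;> simp [hp, mul_add]
  map_smul' c f := by ext p; by_cases hp : p.1 = 0 <;> simp [hp] <;> ring

/-- `E_h(B) = t_h* B t_h`. -/
def Emap {n : ℕ} (h : L2 n) (B : ES (Fin 2 × Fin n) →ₗ[ℂ] ES (Fin 2 × Fin n)) :
    L2 n →ₗ[ℂ] L2 n :=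
  LinearMap.adjoint (tMap h) ∘ₗ B ∘ₗ tMap h

/-- `K_τ` for `τ = ∑ γ_k |h_k⟩⟨h_k|`. -/
def Kmap {n : ℕ} (γ : Fin n → ℝ) (h : Fin n → L2 n) (ρ : L2 n →ₗ[ℂ] L2 n) :
    L2 n →ₗ[ℂ] L2 n :=
  ∑ k, (γ k : ℂ) • (mulOp (h k) ∘ₗ ρ ∘ₗ LinearMap.adjoint (mulOp (h k)))

/-- Normalized channel `K̂_τ`. -/
def Khat {n : ℕ} (γ : Fin n → ℝ) (h : Fin n → L2 n) (ρ : L2 n →ₗ[ℂ] L2 n) :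
    L2 n →ₗ[ℂ] L2 n :=
  (LinearMap.trace ℂ (L2 n) (Kmap γ h ρ))⁻¹ • Kmap γ h ρ

/-- `K_τ` for a rank-one `τ = |h⟩⟨h|`. -/
def KmapOne {n : ℕ} (h : L2 n) (ρ : L2 n →ₗ[ℂ] L2 n) : L2 n →ₗ[ℂ] L2 n :=
  mulOp h ∘ₗ ρ ∘ₗ LinearMap.adjoint (mulOp h)

/-- Normalized rank-one channel `K̂_{|h⟩⟨h|}`. -/
def KhatOne {n : ℕ} (h : L2 n) (ρ : L2 n →ₗ[ℂ] L2 n) : L2 n →ₗ[ℂ] L2 n :=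
  (LinearMap.trace ℂ (L2 n) (KmapOne h ρ))⁻¹ • KmapOne h ρ

/-- `(F_{i,j} ⊗ 𝟏)(ρ ⊗ e(γ))(F_{i,j} ⊗ 𝟏)`. -/
def sandwich {n : ℕ} [NeZero n] (b : Fin n → L2 n) (i j : Fin n)
    (ρ γ : L2 n →ₗ[ℂ] L2 n) : ES (Fin n × Fin n × Fin n) →ₗ[ℂ] ES (Fin n × Fin n × Fin n) :=
  pairTensorOp (rankOne (xi b i j)) LinearMap.id ∘ₗ tensorOp ρ (eState γ) ∘ₗ
    pairTensorOp (rankOne (xi b i j)) LinearMap.id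

/-- Teleportation channel `Λ_{i,j}`. -/
def Lam {n : ℕ} [NeZero n] (b : Fin n → L2 n) (i j : Fin n)
    (ρ γ : L2 n →ₗ[ℂ] L2 n) : L2 n →ₗ[ℂ] L2 n :=
  (LinearMap.trace ℂ (ES (Fin n × Fin n × Fin n)) (sandwich b i j ρ γ))⁻¹ •
    ptrace12 (sandwich b i j ρ γ)

open Classical in
/-- Von Neumann entropy of a (Hermitian) operator via its eigenvalues. -/
def vnEntropy {n : ℕ} (σ : L2 n →ₗ[ℂ] L2 n) : ℝ :=
  if h : (matOf σ).IsHermitian then -∑ k, (h.eigenvalues k * Real.log (h.eigenvalues k)) else 0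

/-- The set of values `∑ p_k S(Λ E_k)` over Schatten decompositions `ρ = ∑ p_k E_k`. -/
def ECDset {n : ℕ} (ρ : L2 n →ₗ[ℂ] L2 n)
    (Λ : (L2 n →ₗ[ℂ] L2 n) →ₗ[ℂ] (L2 n →ₗ[ℂ] L2 n)) : Set ℝ :=
  {x | ∃ (p : Fin n → ℝ) (e : Fin n → L2 n), Orthonormal ℂ e ∧ (∀ k, 0 ≤ p k) ∧
        (∑ k, p k) = 1 ∧ ρ = ∑ k, (p k : ℂ) • rankOne (e k) ∧
        x = ∑ k, p k * vnEntropy (Λ (rankOne (e k)))}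
namespace Helper
open ComplexConjugate Matrix
open scoped Matrix

lemma matOf_toEuclideanLin {α β : Type} [Fintype α] [Fintype β] [DecidableEq α] [DecidableEq β]
    (M : Matrix β α ℂ) : matOf (Matrix.toEuclideanLin M) = M := by
  rw [matOf, Matrix.toEuclideanLin_eq_toLin, LinearMap.toMatrix_toLin]

lemma toEuclideanLin_matOf {α β : Type} [Fintype α] [Fintype β] [DecidableEq α] [DecidableEq β]
    (A : ES α →ₗ[ℂ] ES β) : Matrix.toEuclideanLin (matOf A) = A := by
  rw [matOf, Matrix.toEuclideanLin_eq_toLin, Matrix.toLin_toMatrix]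

lemma matOf_comp {α β γ : Type} [Fintype α] [Fintype β] [Fintype γ]
    [DecidableEq α] [DecidableEq β] [DecidableEq γ]
    (A : ES β →ₗ[ℂ] ES γ) (B : ES α →ₗ[ℂ] ES β) :
    matOf (A ∘ₗ B) = matOf A * matOf B := by
  rw [matOf, matOf, matOf, LinearMap.toMatrix_comp _ (PiLp.basisFun 2 ℂ β)]

lemma matOf_adjoint {α β : Type} [Fintype α] [Fintype β] [DecidableEq α] [DecidableEq β]
    (A : ES α →ₗ[ℂ] ES β) : matOf (LinearMap.adjoint A) = (matOf A)ᴴ := by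
  conv_lhs => rw [← toEuclideanLin_matOf A]
  rw [← Matrix.toEuclideanLin_conjTranspose_eq_adjoint, matOf_toEuclideanLin]

lemma trace_matOf {α : Type} [Fintype α] [DecidableEq α] (A : ES α →ₗ[ℂ] ES α) :
    LinearMap.trace ℂ (ES α) A = (matOf A).trace := by
  rw [matOf, LinearMap.trace_eq_matrix_trace ℂ (PiLp.basisFun 2 ℂ α) A]

lemma matOf_apply {α β : Type} [Fintype α] [Fintype β] [DecidableEq α] [DecidableEq β]
    (A : ES α →ₗ[ℂ] ES β) (p : β) (q : α) :
    matOf A p q = A (EuclideanSpace.single q 1) p := by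
  rw [matOf, LinearMap.toMatrix_apply, PiLp.basisFun_apply]
  rfl

end Helper
namespace Helper
open ComplexConjugate Matrix
open scoped Matrix Kronecker

set_option linter.unusedSectionVars false

variable {n : ℕ} [NeZero n]

lemma apply_eq {α β : Type} [Fintype α] [Fintype β] [DecidableEq α] [DecidableEq β]
    (A : ES α →ₗ[ℂ] ES β) (f : ES α) (p : β) :
    A f p = ∑ q, matOf A p q * f q := by
  conv_lhs => rw [← toEuclideanLin_matOf A]
  rw [Matrix.toEuclideanLin_apply]
  rfl

lemma matOf_mulOp (g : L2 n) : matOf (mulOp g) = Matrix.diagonal g := by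
  ext k q
  rw [matOf_apply]
  simp [mulOp, Matrix.diagonal, EuclideanSpace.single_apply]

lemma matOf_transOp (k : Fin n) :
    matOf (transOp k) = Matrix.of fun m q => if q = k + m then 1 else 0 := by
  ext m q
  rw [matOf_apply]
  simp [transOp, EuclideanSpace.single_apply, eq_comm]

lemma matOf_rankOne {α : Type} [Fintype α] [DecidableEq α] (g : ES α) :
    matOf (rankOne g) = Matrix.of fun p q => g p * conj (g q) := by
  ext p q
  rw [matOf_apply]
  simp [rankOne, EuclideanSpace.inner_single_right, mul_comm]

lemma matOf_Jmap :
    matOf (Jmap n) = Matrix.of fun (p : Fin n × Fin n) m =>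
      if p.1 = p.2 ∧ p.2 = m then 1 else 0 := by
  ext p m
  rw [matOf_apply]
  simp only [Jmap, LinearMap.coe_mk, AddHom.coe_mk, Matrix.of_apply]
  rcases p with ⟨k, l⟩
  by_cases h : k = l <;> simp [h, EuclideanSpace.single_apply]

lemma matOf_id {α : Type} [Fintype α] [DecidableEq α] :
    matOf (LinearMap.id : ES α →ₗ[ℂ] ES α) = 1 := by
  rw [matOf, LinearMap.toMatrix_id]

lemma matOf_smul {α : Type} [Fintype α] [DecidableEq α] (c : ℂ) (A : ES α →ₗ[ℂ] ES α) :
    matOf (c • A) = c • matOf A := by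
  simp [matOf]

lemma matOf_tensorOp {α β γ δ : Type} [Fintype α] [Fintype β] [Fintype γ] [Fintype δ]
    [DecidableEq α] [DecidableEq β] [DecidableEq γ] [DecidableEq δ]
    (A : ES α →ₗ[ℂ] ES β) (B : ES γ →ₗ[ℂ] ES δ) :
    matOf (tensorOp A B) = matOf A ⊗ₖ matOf B :=
  matOf_toEuclideanLin _

lemma matOf_pairTensorOp (T : ES (Fin n × Fin n) →ₗ[ℂ] ES (Fin n × Fin n))
    (S : L2 n →ₗ[ℂ] L2 n) :
    matOf (pairTensorOp T S) =
      (Matrix.reindex (Equiv.prodAssoc (Fin n) (Fin n) (Fin n))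
        (Equiv.prodAssoc (Fin n) (Fin n) (Fin n))) (matOf T ⊗ₖ matOf S) :=
  matOf_toEuclideanLin _

lemma matOf_ptrace12 (T : ES (Fin n × Fin n × Fin n) →ₗ[ℂ] ES (Fin n × Fin n × Fin n)) :
    matOf (ptrace12 T) =
      Matrix.of fun c c' => ∑ a : Fin n, ∑ b : Fin n, matOf T (a, (b, c)) (a, (b, c')) :=
  matOf_toEuclideanLin _

lemma matOf_eState (γ : L2 n →ₗ[ℂ] L2 n) :
    matOf (eState γ) = Matrix.of fun (p q : Fin n × Fin n) =>
      if p.1 = p.2 ∧ q.1 = q.2 then matOf γ p.1 q.1 else 0 := by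
  rw [eState, matOf_comp, matOf_comp, matOf_adjoint, matOf_Jmap]
  ext ⟨k, l⟩ ⟨k', l'⟩
  simp only [Matrix.mul_apply, Matrix.conjTranspose_apply, Matrix.of_apply,
    apply_ite (star : ℂ → ℂ), star_one, star_zero, ite_mul, one_mul, zero_mul,
    mul_ite, mul_one, mul_zero]
  by_cases h : k = l
  · by_cases h' : k' = l'
    · simp [h, h', Finset.sum_ite_eq]
    · simp [h, h']
  · simp [h]

lemma xi_apply (b : Fin n → L2 n) (i j : Fin n) (p : Fin n × Fin n) :
    xi b i j p = if p.1 = j + p.2 then b i p.1 else 0 := by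
  rcases p with ⟨k, l⟩
  show (tensorOp (mulOp (b i)) (transOp j)) (Jmap n (oneVec n)) (k, l) = _
  rw [apply_eq]
  have hJ : ∀ q : Fin n × Fin n, Jmap n (oneVec n) q = if q.1 = q.2 then 1 else 0 := by
    intro q; simp [Jmap, oneVec]
  simp only [hJ, matOf_tensorOp, matOf_mulOp, matOf_transOp, Matrix.kroneckerMap_apply,
    Matrix.of_apply, Matrix.diagonal, Fintype.sum_prod_type]
  simp [Finset.sum_ite_eq, Finset.sum_ite_eq', mul_ite, ite_mul, eq_comm]

end Helper
namespace Helper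
open ComplexConjugate Matrix
open scoped Matrix Kronecker
set_option linter.unusedSectionVars false

variable {n : ℕ} [NeZero n]

lemma matOf_P (b : Fin n → L2 n) (i j : Fin n) :
    matOf (pairTensorOp (rankOne (xi b i j)) LinearMap.id) =
      Matrix.of fun (x y : Fin n × Fin n × Fin n) =>
        xi b i j (x.1, x.2.1) * conj (xi b i j (y.1, y.2.1)) *
          (if x.2.2 = y.2.2 then 1 else 0) := by
  rw [matOf_pairTensorOp, matOf_rankOne, matOf_id]
  ext ⟨a, bb, c⟩ ⟨p, q, r⟩
  simp [Matrix.one_apply, Equiv.prodAssoc]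

lemma matOf_Q (ρ γ : L2 n →ₗ[ℂ] L2 n) :
    matOf (tensorOp ρ (eState γ)) =
      Matrix.of fun (x y : Fin n × Fin n × Fin n) =>
        matOf ρ x.1 y.1 *
          (if x.2.1 = x.2.2 ∧ y.2.1 = y.2.2 then matOf γ x.2.1 y.2.1 else 0) := by
  rw [matOf_tensorOp, matOf_eState]
  ext ⟨a, bb, c⟩ ⟨p, q, r⟩
  simp

lemma col2 (P : Prop) [Decidable P] (f : Fin n → Fin n → ℂ) (j c' : Fin n) :
    (∑ x2 : Fin n, ∑ x3 : Fin n,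
        if x2 = j + x3 then if P then if x3 = c' then f x2 x3 else 0 else 0 else 0)
      = if P then f (j + c') c' else 0 := by
  rw [Finset.sum_comm]
  simp [Finset.sum_ite_irrel]

lemma col3 (f : Fin n → Fin n → ℂ) (j c : Fin n) :
    (∑ x : Fin n, ∑ y : Fin n,
        if x = j + y then if y = c then f x y else 0 else 0) = f (j + c) c := by
  rw [Finset.sum_comm]
  simp

lemma sandwich_entry (b : Fin n → L2 n) (i j : Fin n) (ρ γ : L2 n →ₗ[ℂ] L2 n)
    (a b2 c a' b2' c' : Fin n) :
    matOf (sandwich b i j ρ γ) (a, b2, c) (a', b2', c') =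
      xi b i j (a, b2) * conj (xi b i j (a', b2')) *
        (conj (b i (j + c)) * b i (j + c') * matOf ρ (j + c) (j + c') * matOf γ c c') := by
  rw [sandwich, matOf_comp, matOf_comp, matOf_P, matOf_Q]
  simp only [Matrix.mul_apply, Matrix.of_apply, Fintype.sum_prod_type]
  simp only [xi_apply, ite_and, apply_ite (starRingEnd ℂ), map_zero,
    mul_ite, mul_zero, mul_one, ite_mul, zero_mul, one_mul,
    Finset.sum_ite_irrel, Finset.sum_const_zero, Finset.sum_ite_eq, Finset.sum_ite_eq',
    Finset.mem_univ, if_true]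
  by_cases h' : a' = j + b2'
  · simp only [h', if_true]
    by_cases h : a = j + b2
    · simp only [h, if_true, col2]
      simp only [mul_ite, mul_zero, col3]
      ring
    · simp [h]
  · simp [h']
end Helper
namespace Helper
open ComplexConjugate Matrix
open scoped Matrix Kronecker
set_option linter.unusedSectionVars false

variable {n : ℕ} [NeZero n]

lemma matOf_sum {α : Type} [Fintype α] [DecidableEq α] {ι : Type} (s : Finset ι)
    (f : ι → (ES α →ₗ[ℂ] ES α)) : matOf (∑ i ∈ s, f i) = ∑ i ∈ s, matOf (f i) :=
  map_sum (LinearMap.toMatrix (PiLp.basisFun 2 ℂ α) (PiLp.basisFun 2 ℂ α)) f s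

lemma matOf_KmapOne (h : L2 n) (ρ : L2 n →ₗ[ℂ] L2 n) :
    matOf (KmapOne h ρ) = Matrix.of fun k l => h k * matOf ρ k l * conj (h l) := by
  rw [KmapOne, matOf_comp, matOf_comp, matOf_adjoint, matOf_mulOp]
  ext k l
  simp [Matrix.diagonal_conjTranspose, Matrix.diagonal_mul, Matrix.mul_diagonal, mul_comm,
    mul_assoc, mul_left_comm]

lemma matOf_conjTrans (j : Fin n) (σ : L2 n →ₗ[ℂ] L2 n) :
    matOf (transOp j ∘ₗ σ ∘ₗ LinearMap.adjoint (transOp j)) =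
      Matrix.of fun c c' => matOf σ (j + c) (j + c') := by
  rw [matOf_comp, matOf_comp, matOf_adjoint, matOf_transOp]
  ext c c'
  simp only [Matrix.mul_apply, Matrix.of_apply, Matrix.conjTranspose_apply,
    apply_ite (star : ℂ → ℂ), star_one, star_zero, ite_mul, one_mul, zero_mul,
    mul_ite, mul_one, mul_zero, Finset.sum_ite_eq, Finset.sum_ite_eq',
    Finset.sum_ite_irrel, Finset.sum_const_zero, Finset.mem_univ, if_true]

lemma matOf_Kmap (β : Fin n → ℝ) (h : Fin n → L2 n) (τ : L2 n →ₗ[ℂ] L2 n) :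
    matOf (Kmap β h τ) =
      Matrix.of fun c c' => (∑ k, (β k : ℂ) * (h k c * conj (h k c'))) * matOf τ c c' := by
  rw [Kmap, matOf_sum]
  ext c c'
  rw [Matrix.sum_apply, Matrix.of_apply, Finset.sum_mul]
  refine Finset.sum_congr rfl fun k _ => ?_
  rw [matOf_smul, Matrix.smul_apply, matOf_comp, matOf_comp, matOf_adjoint, matOf_mulOp]
  simp [Matrix.diagonal_conjTranspose, Matrix.diagonal_mul, Matrix.mul_diagonal, smul_eq_mul]
  ring

lemma matOf_gamma (β : Fin n → ℝ) (hON : Fin n → L2 n) :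
    matOf (∑ k, (β k : ℂ) • rankOne (hON k)) =
      Matrix.of fun c c' => ∑ k, (β k : ℂ) * (hON k c * conj (hON k c')) := by
  rw [matOf_sum]
  ext c c'
  rw [Matrix.sum_apply, Matrix.of_apply]
  refine Finset.sum_congr rfl fun k _ => ?_
  rw [matOf_smul, Matrix.smul_apply, matOf_rankOne]
  simp [mul_assoc]

end Helper
open ComplexConjugate Matrix Helper
open scoped Matrix Kronecker

/-- channel decomposition
`Λ_{i,j}(ρ ⊗ γ) = K̂_γ ∘ K^j ∘ K̂_{|conj(b_i)⟩⟨conj(b_i)|}(ρ)`. -/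

theorem stmt18 {n : ℕ} [NeZero n] (b : OrthonormalBasis (Fin n) ℂ (L2 n))
    (hON : OrthonormalBasis (Fin n) ℂ (L2 n)) (β : Fin n → ℝ) (hβ : ∀ k, 0 ≤ β k)
    (γ : L2 n →ₗ[ℂ] L2 n) (hγ : γ = ∑ k, (β k : ℂ) • rankOne (hON k))
    (ρ : L2 n →ₗ[ℂ] L2 n) (hρ : IsPos ρ) (hρt : LinearMap.trace ℂ (L2 n) ρ = 1)
    (i j : Fin n)
    (h1 : 0 < (LinearMap.trace ℂ (L2 n) (KmapOne (cvec (b i)) ρ)).re)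
    (h2 : 0 < (LinearMap.trace ℂ (L2 n)
        (Kmap β (⇑hON)
          (transOp j ∘ₗ KhatOne (cvec (b i)) ρ ∘ₗ LinearMap.adjoint (transOp j)))).re)
    (hden : 0 < (LinearMap.trace ℂ (ES (Fin n × Fin n × Fin n))
        (sandwich (⇑b) i j ρ γ)).re) :
    Lam (⇑b) i j ρ γ =
      Khat β (⇑hON)
        (transOp j ∘ₗ KhatOne (cvec (b i)) ρ ∘ₗ LinearMap.adjoint (transOp j)) := by
  classical
  set R := matOf ρ with hR
  set C := matOf γ with hCdef
  -- matrix of KmapOne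
  have ht1mat : matOf (KmapOne (cvec (b i)) ρ) =
      Matrix.of fun k l => conj (b i k) * R k l * b i l := by
    rw [matOf_KmapOne]
    ext k l
    simp [cvec, ← hR]
  set t1 : ℂ := ∑ k, conj (b i k) * R k k * b i k with ht1def
  have htr1 : LinearMap.trace ℂ (L2 n) (KmapOne (cvec (b i)) ρ) = t1 := by
    rw [trace_matOf, ht1mat]
    simp [Matrix.trace, Matrix.diag]
    rfl
  have ht1ne : t1 ≠ 0 := by
    intro h
    rw [htr1, h] at h1
    simp at h1
  -- matrix of the composite τ operator
  have hτ : matOf (transOp j ∘ₗ KhatOne (cvec (b i)) ρ ∘ₗ LinearMap.adjoint (transOp j)) =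
      Matrix.of fun c c' => t1⁻¹ * (conj (b i (j + c)) * R (j + c) (j + c') * b i (j + c')) := by
    rw [matOf_conjTrans, KhatOne, matOf_smul, htr1, ht1mat]
    ext c c'
    simp
  -- entries of γ
  have hC : ∀ c c', C c c' = ∑ k, (β k : ℂ) * (hON k c * conj (hON k c')) := by
    intro c c'
    rw [hCdef, hγ, matOf_gamma]
    rfl
  -- matrix of Kmap applied to the composite
  have hK : matOf (Kmap β (⇑hON)
        (transOp j ∘ₗ KhatOne (cvec (b i)) ρ ∘ₗ LinearMap.adjoint (transOp j))) =
      Matrix.of fun c c' =>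
        C c c' * (t1⁻¹ * (conj (b i (j + c)) * R (j + c) (j + c') * b i (j + c'))) := by
    rw [matOf_Kmap, hτ]
    ext c c'
    rw [Matrix.of_apply, Matrix.of_apply, Matrix.of_apply, hC]
  set t2 : ℂ := ∑ c, C c c * (t1⁻¹ * (conj (b i (j + c)) * R (j + c) (j + c) * b i (j + c)))
    with ht2def
  have htr2 : LinearMap.trace ℂ (L2 n) (Kmap β (⇑hON)
      (transOp j ∘ₗ KhatOne (cvec (b i)) ρ ∘ₗ LinearMap.adjoint (transOp j))) = t2 := by
    rw [trace_matOf, hK]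
    simp [Matrix.trace, Matrix.diag]
    rfl
  -- norm of xi is 1
  have hbi : (∑ a, b i a * conj (b i a)) = 1 := by
    have h1' : (inner ℂ (b i) (b i) : ℂ) = 1 := by
      have := orthonormal_iff_ite.mp b.orthonormal i i
      simpa using this
    rw [← h1', PiLp.inner_apply]
    exact Finset.sum_congr rfl fun a _ => by
      simp [RCLike.inner_apply, mul_comm]
      exact Complex.mul_conj' _
  have hxi : (∑ a, ∑ b2, xi (⇑b) i j (a, b2) * conj (xi (⇑b) i j (a, b2))) = 1 := by
    simp only [xi_apply, apply_ite (starRingEnd ℂ), map_zero, ite_mul, zero_mul, mul_ite,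
      mul_zero, ← ite_and, and_self]
    rw [Finset.sum_comm]
    simp only [Finset.sum_ite_eq', Finset.mem_univ, if_true]
    rw [← Equiv.sum_comp (Equiv.addLeft j) (fun a => b i a * conj (b i a))] at hbi
    simpa using hbi
  -- trace of sandwich
  have hTrS : LinearMap.trace ℂ (ES (Fin n × Fin n × Fin n)) (sandwich (⇑b) i j ρ γ)
      = t1 * t2 := by
    rw [trace_matOf]
    have : (matOf (sandwich (⇑b) i j ρ γ)).trace
        = ∑ a, ∑ b2, ∑ c, matOf (sandwich (⇑b) i j ρ γ) (a, b2, c) (a, b2, c) := by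
      simp [Matrix.trace, Matrix.diag, Fintype.sum_prod_type]
    rw [this]
    simp only [sandwich_entry, ← Finset.mul_sum, ← Finset.sum_mul]
    rw [hxi, one_mul, ht2def, Finset.mul_sum]
    refine Finset.sum_congr rfl fun c _ => ?_
    field_simp
    ring
  -- final assembly
  have hinj : ∀ (A B : L2 n →ₗ[ℂ] L2 n), matOf A = matOf B → A = B := fun A B h =>
    (LinearMap.toMatrix (PiLp.basisFun 2 ℂ (Fin n)) (PiLp.basisFun 2 ℂ (Fin n))).injective h
  refine hinj _ _ ?_
  rw [Lam, Khat, matOf_smul, matOf_smul, hTrS, htr2, hK, matOf_ptrace12]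
  ext c c'
  simp only [Matrix.smul_apply, Matrix.of_apply]
  have hpt : (∑ a, ∑ b2, matOf (sandwich (⇑b) i j ρ γ) (a, b2, c) (a, b2, c'))
      = conj (b i (j + c)) * b i (j + c') * R (j + c) (j + c') * C c c' := by
    simp only [sandwich_entry, ← Finset.sum_mul]
    rw [hxi, one_mul]
  rw [hpt]
  simp only [smul_eq_mul, mul_inv]
  ring
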